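/- For three points x_i, x_j, x_k in R^d with d ≥ 2, not all collinear, the quantity b_{ijk} = ⟨x_i−x_j, x_i−x_k⟩/(r_{ij}² r_{ik}²) + ⟨x_j−x_i, x_j−x_k⟩/(r_{ij}² r_{jk}²) + ⟨x_k−x_i, x_k−x_j⟩/(r_{ik}² r_{jk}²) equals 1/(2R²), where R is the circumradius of the triangle with vertices x_i, x_j, x_k. -/

import Mathlib

set_option maxHeartbeats 1000000 in
theorem stmt_1 (d : ℕ) (hd : 2 ≤ d) (a b c : EuclideanSpace ℝ (Fin d))
    (h : AffineIndependent ℝ ![a, b, c]) :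
    (inner ℝ (a - b) (a - c) : ℝ) / (dist a b ^ 2 * dist a c ^ 2)
      + (inner ℝ (b - a) (b - c) : ℝ) / (dist a b ^ 2 * dist b c ^ 2)
      + (inner ℝ (c - a) (c - b) : ℝ) / (dist a c ^ 2 * dist b c ^ 2)
      = 1 / (2 * (Affine.Simplex.mk ![a, b, c] h).circumradius ^ 2) := by
  classical
  have hpos : ∀ v : EuclideanSpace ℝ (Fin d), v ≠ 0 → 0 < (inner ℝ v v : ℝ) := fun v hv =>
    lt_of_le_of_ne real_inner_self_nonneg (Ne.symm (inner_self_ne_zero.2 hv))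
  have hncol : ¬ Collinear ℝ ({a, b, c} : Set (EuclideanSpace ℝ (Fin d))) :=
    affineIndependent_iff_not_collinear_set.1 h
  have hab : a ≠ b := by
    have := h.injective.ne (show (0 : Fin 3) ≠ 1 by decide)
    simpa using this
  have hac : a ≠ c := by
    have := h.injective.ne (show (0 : Fin 3) ≠ 2 by decide)
    simpa using this
  have hbc : b ≠ c := by
    have := h.injective.ne (show (1 : Fin 3) ≠ 2 by decide)
    simpa using this
  set e : EuclideanSpace ℝ (Fin d) := b - a with he
  set f : EuclideanSpace ℝ (Fin d) := c - a with hf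
  set E : ℝ := inner ℝ e e with hE
  set F : ℝ := inner ℝ f f with hF
  set G : ℝ := inner ℝ e f with hG
  have hcomm : (inner ℝ f e : ℝ) = G := by rw [real_inner_comm]
  have hene : e ≠ 0 := sub_ne_zero.2 (Ne.symm hab)
  have hfne : f ≠ 0 := sub_ne_zero.2 (Ne.symm hac)
  have hEpos : 0 < E := hpos e hene
  have hFpos : 0 < F := hpos f hfne
  have hefne : e - f ≠ 0 := by
    rw [he, hf]
    intro hh
    exact hbc (by linear_combination (norm := abel) sub_eq_zero.1 hh)
  have hEF2G : 0 < E - 2 * G + F := by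
    have h1 : (0:ℝ) < inner ℝ (e - f) (e - f) := hpos _ hefne
    have h2 : (inner ℝ (e - f) (e - f) : ℝ) = E - 2 * G + F := by
      simp only [inner_sub_left, inner_sub_right, ← hE, ← hF, ← hG, hcomm]
      ring
    linarith
  have hkey : F • e - G • f ≠ (0 : EuclideanSpace ℝ (Fin d)) := by
    intro hzero
    apply hncol
    rw [collinear_iff_of_mem (Set.mem_insert a _)]
    refine ⟨f, fun p hp => ?_⟩
    rcases hp with hp | hp | hp
    · exact ⟨0, by rw [hp]; simp⟩
    · refine ⟨G / F, ?_⟩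
      have hFeGf : F • e = G • f := sub_eq_zero.1 hzero
      have hee : e = (G / F) • f := by
        have := congrArg (fun v => (F⁻¹ : ℝ) • v) hFeGf
        simp only [smul_smul] at this
        rw [inv_mul_cancel₀ hFpos.ne', one_smul] at this
        rw [this, div_eq_inv_mul]
      rw [hp]
      show b = (G / F) • f + a
      rw [← hee, he]
      abel
    · refine ⟨1, ?_⟩
      rw [hp, one_smul]
      show c = f + a
      rw [hf]; abel
  set D : ℝ := E * F - G ^ 2 with hD
  have hDpos : 0 < D := by
    have h1 : (0:ℝ) < inner ℝ (F • e - G • f) (F • e - G • f) := hpos _ hkey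
    have h2 : (inner ℝ (F • e - G • f) (F • e - G • f) : ℝ) = F * D := by
      simp only [inner_sub_left, inner_sub_right, real_inner_smul_left,
        real_inner_smul_right, ← hE, ← hF, ← hG, hcomm, hD]
      ring
    nlinarith
  have hDne : D ≠ 0 := hDpos.ne'
  set x : ℝ := F * (G - E) / (2 * D) with hx
  set y : ℝ := E * (G - F) / (2 * D) with hy
  set u : EuclideanSpace ℝ (Fin d) := x • e + y • f with hu
  have heu : (inner ℝ e u : ℝ) = -E / 2 := by
    have h1 : (inner ℝ e u : ℝ) = x * E + y * G := by
      simp only [hu, inner_add_right, real_inner_smul_right, ← hE, ← hG]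
    rw [h1, hx, hy]
    field_simp
    linear_combination (-E) * hD
  have hfu : (inner ℝ f u : ℝ) = -F / 2 := by
    have h1 : (inner ℝ f u : ℝ) = x * G + y * F := by
      simp only [hu, inner_add_right, real_inner_smul_right, ← hF, hcomm]
    rw [h1, hx, hy]
    field_simp
    linear_combination (-F) * hD
  have huu : (inner ℝ u u : ℝ) = E * F * (E - 2 * G + F) / (4 * D) := by
    have h1 : (inner ℝ u u : ℝ) = x * inner ℝ e u + y * inner ℝ f u := by
      simp only [hu, inner_add_left, real_inner_smul_left]
    rw [h1, heu, hfu, hx, hy]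
    field_simp
    ring
  have huupos : 0 < (inner ℝ u u : ℝ) := by rw [huu]; positivity
  set O : EuclideanSpace ℝ (Fin d) := a - u with hO
  set s : Affine.Simplex ℝ (EuclideanSpace ℝ (Fin d)) 2 := Affine.Simplex.mk ![a, b, c] h
    with hs
  set r : ℝ := Real.sqrt (inner ℝ u u : ℝ) with hr
  have hOmem : O ∈ affineSpan ℝ (Set.range s.points) := by
    have hOeq : O = (-u) +ᵥ a := by rw [hO]; show a - u = -u + a; abel
    rw [hOeq]
    refine AffineSubspace.vadd_mem_of_mem_direction ?_ (mem_affineSpan ℝ ⟨0, rfl⟩)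
    rw [direction_affineSpan]
    have hmem1 : e ∈ vectorSpan ℝ (Set.range s.points) :=
      vsub_mem_vectorSpan ℝ ⟨1, rfl⟩ ⟨0, rfl⟩
    have hmem2 : f ∈ vectorSpan ℝ (Set.range s.points) :=
      vsub_mem_vectorSpan ℝ ⟨2, rfl⟩ ⟨0, rfl⟩
    have hmu : -u = (-x) • e + (-y) • f := by rw [hu]; module
    rw [hmu]
    exact Submodule.add_mem _ (Submodule.smul_mem _ _ hmem1) (Submodule.smul_mem _ _ hmem2)
  have hdista : dist a O = r := by
    rw [dist_eq_norm, hO, hr]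
    have h1 : a - (a - u) = u := by abel
    rw [h1, norm_eq_sqrt_real_inner]
  have hdistb : dist b O = r := by
    rw [dist_eq_norm, hO, hr]
    have h1 : b - (a - u) = e + u := by rw [he]; abel
    rw [h1, norm_eq_sqrt_real_inner]
    congr 1
    have h2 : (inner ℝ (e + u) (e + u) : ℝ) = E + 2 * inner ℝ e u + inner ℝ u u := by
      simp only [inner_add_left, inner_add_right, ← hE, real_inner_comm u e]
      ring
    rw [h2, heu]; ring
  have hdistc : dist c O = r := by
    rw [dist_eq_norm, hO, hr]
    have h1 : c - (a - u) = f + u := by rw [hf]; abel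
    rw [h1, norm_eq_sqrt_real_inner]
    congr 1
    have h2 : (inner ℝ (f + u) (f + u) : ℝ) = F + 2 * inner ℝ f u + inner ℝ u u := by
      simp only [inner_add_left, inner_add_right, ← hF, real_inner_comm u f]
      ring
    rw [h2, hfu]; ring
  have hrall : ∀ i, dist (s.points i) O = r := by
    intro i
    fin_cases i
    · exact hdista
    · exact hdistb
    · exact hdistc
  have hreq : r = s.circumradius := s.eq_circumradius_of_dist_eq hOmem hrall
  have hR2 : s.circumradius ^ 2 = E * F * (E - 2 * G + F) / (4 * D) := by
    rw [← hreq, hr, Real.sq_sqrt huupos.le, huu]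
  have hdab : dist a b ^ 2 = E := by
    rw [dist_eq_norm, ← real_inner_self_eq_norm_sq]
    have h1 : a - b = -e := by rw [he]; abel
    rw [h1, inner_neg_neg, ← hE]
  have hdac : dist a c ^ 2 = F := by
    rw [dist_eq_norm, ← real_inner_self_eq_norm_sq]
    have h1 : a - c = -f := by rw [hf]; abel
    rw [h1, inner_neg_neg, ← hF]
  have hdbc : dist b c ^ 2 = E - 2 * G + F := by
    rw [dist_eq_norm, ← real_inner_self_eq_norm_sq]
    have h1 : b - c = e - f := by rw [he, hf]; abel
    rw [h1]
    simp only [inner_sub_left, inner_sub_right, ← hE, ← hF, ← hG, hcomm]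
    ring
  have hiab : (inner ℝ (a - b) (a - c) : ℝ) = G := by
    have h1 : a - b = -e := by rw [he]; abel
    have h2 : a - c = -f := by rw [hf]; abel
    rw [h1, h2, inner_neg_neg, ← hG]
  have hiba : (inner ℝ (b - a) (b - c) : ℝ) = E - G := by
    have h1 : b - c = e - f := by rw [he, hf]; abel
    rw [show b - a = e from rfl, h1, inner_sub_right, ← hE, ← hG]
  have hica : (inner ℝ (c - a) (c - b) : ℝ) = F - G := by
    have h1 : c - b = f - e := by rw [he, hf]; abel
    rw [show c - a = f from rfl, h1, inner_sub_right, ← hF, hcomm]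
  rw [hiab, hiba, hica, hdab, hdac, hdbc]
  rw [show (Affine.Simplex.mk ![a, b, c] h).circumradius = s.circumradius from rfl, hR2]
  field_simp [hEF2G.ne']
  rw [hD]
  have hK : -(G * 2) + F + E ≠ 0 := by intro h0; linarith
  field_simp
  ring
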